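/- If X and Y are independent random variables with Borel-Tanner distributions p(·|θ, r) and p(·|θ, s) respectively (same θ), then X + Y has Borel-Tanner distribution p(·|θ, r+s); equivalently, for all integers z ≥ r+s, Σ_{x=r}^{z-s} a_r(x) a_s(z-x) = a_{r+s}(z), where a_k(x) = k x^{x-k-1}/(x-k)!. -/

import Mathlib

open Finset Polynomial

lemma findiff (n : ℕ) (p : Polynomial ℝ) (h : p.degree < n) :
    ∑ k ∈ range (n+1), (-1:ℝ)^k * (n.choose k : ℝ) * p.eval (k:ℝ) = 0 := by
  induction n generalizing p with
  | zero =>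
    have : p = 0 := by
      rw [← Polynomial.degree_eq_bot]
      exact Nat.WithBot.lt_zero_iff.mp (by exact_mod_cast h)
    simp [this]
  | succ n ih =>
    set q : Polynomial ℝ := p - p.comp (X + C 1) with hq
    have hdq : q.degree < n := by
      by_cases h0 : p.natDegree = 0
      · obtain ⟨c, rfl⟩ := Polynomial.natDegree_eq_zero.mp h0
        have : q = 0 := by simp [hq]
        rw [this, Polynomial.degree_zero]
        exact WithBot.bot_lt_coe n
      · have hp0 : p ≠ 0 := fun hh => h0 (by simp [hh])
        have hn1 : (X + C (1:ℝ)).natDegree = 1 := Polynomial.natDegree_X_add_C 1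
        have hlc : (p.comp (X + C 1)).leadingCoeff = p.leadingCoeff := by
          rw [Polynomial.leadingCoeff_comp (by rw [hn1]; exact one_ne_zero)]
          have h1 : (X + C (1:ℝ)).leadingCoeff = 1 := Polynomial.leadingCoeff_X_add_C 1
          rw [h1, one_pow, mul_one]
        have hc0 : p.comp (X + C 1) ≠ 0 := by
          intro hh
          apply hp0
          rw [← Polynomial.leadingCoeff_eq_zero, ← hlc, hh, leadingCoeff_zero]
        have hdeg : p.degree = (p.comp (X + C 1)).degree := by
          rw [Polynomial.degree_eq_natDegree hp0, Polynomial.degree_eq_natDegree hc0,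
            Polynomial.natDegree_comp, hn1, mul_one]
        have hlt : q.degree < p.degree :=
          Polynomial.degree_sub_lt hdeg hp0 hlc.symm
        have hle : p.degree ≤ n := by
          rw [Polynomial.degree_eq_natDegree hp0] at h ⊢
          exact_mod_cast Nat.lt_succ_iff.mp (by exact_mod_cast h)
        exact lt_of_lt_of_le hlt hle
    have key' : ∑ k ∈ range (n+1), (-1:ℝ)^k * (n.choose k : ℝ) * p.eval (k:ℝ)
        = ∑ k ∈ range (n+1), (-1:ℝ)^k * (n.choose k : ℝ) * p.eval ((k:ℝ)+1) := by
      have hk := ih q hdq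
      have e1 : ∀ k ∈ range (n+1), (-1:ℝ)^k * (n.choose k : ℝ) * q.eval (k:ℝ)
          = (-1:ℝ)^k * (n.choose k : ℝ) * p.eval (k:ℝ)
            - (-1:ℝ)^k * (n.choose k : ℝ) * p.eval ((k:ℝ)+1) := by
        intro k _; simp [hq, Polynomial.eval_comp]; ring
      rw [Finset.sum_congr rfl e1, Finset.sum_sub_distrib] at hk
      linarith
    rw [Finset.sum_range_succ' _ (n+1)]
    have e2 : ∀ k ∈ range (n+1),
        (fun k => (-1:ℝ)^k * (((n+1).choose k : ℕ) : ℝ) * p.eval (k:ℝ)) (k+1)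
        = -((-1:ℝ)^k * (n.choose k : ℝ) * p.eval ((k:ℝ)+1))
          + (-1:ℝ)^(k+1) * (n.choose (k+1) : ℝ) * p.eval (((k+1:ℕ)):ℝ) := by
      intro k _
      simp only [Nat.choose_succ_succ]
      push_cast
      ring
    rw [Finset.sum_congr rfl e2, Finset.sum_add_distrib]
    have t := Finset.sum_range_succ' (fun k => (-1:ℝ)^k * ((n.choose k : ℕ) : ℝ) * p.eval (k:ℝ)) (n+1)
    have t2 := Finset.sum_range_succ (fun k => (-1:ℝ)^k * ((n.choose k : ℕ) : ℝ) * p.eval (k:ℝ)) (n+1)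
    beta_reduce at t t2
    have hch : ((n.choose (n+1) : ℕ) : ℝ) = 0 := by simp [Nat.choose_succ_self]
    rw [hch] at t2
    have hneg : ∑ x ∈ range (n+1), -((-1:ℝ)^x * (n.choose x : ℝ) * p.eval ((x:ℝ)+1))
        = -∑ x ∈ range (n+1), (-1:ℝ)^x * (n.choose x : ℝ) * p.eval ((x:ℝ)+1) :=
      Finset.sum_neg_distrib _
    have hc0 : (-1:ℝ)^(0:ℕ) * (((n+1).choose 0 : ℕ) : ℝ) * p.eval ((0:ℕ):ℝ)
        = (-1:ℝ)^(0:ℕ) * ((n.choose 0 : ℕ) : ℝ) * p.eval ((0:ℕ):ℝ) := by norm_num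
    rw [hneg, hc0]
    linarith [t, t2, key']

noncomputable def btG (x : ℝ) : ℕ → ℝ
  | 0 => 1
  | (k+1) => x * (x + (k+1 : ℕ))^k

lemma btG_mul_pow (x : ℝ) (k e : ℕ) (h : 1 ≤ k + e) :
    btG x k * (x + (k:ℕ))^e = x * (x + (k:ℕ))^(k + e - 1) := by
  cases k with
  | zero =>
    simp only [btG, one_mul, Nat.cast_zero, add_zero, zero_add]
    cases e with
    | zero => omega
    | succ e' => rw [pow_succ']; congr 1
  | succ k' =>
    simp only [btG]
    rw [mul_assoc, ← pow_add]
    congr 2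
    omega

lemma choose_aux (n k : ℕ) : (n+1-k) * (n+1).choose k = (n+1) * n.choose k := by
  calc (n+1-k) * (n+1).choose k = (n+1).choose k * ((n+1) - k) := by ring
    _ = (n+1).choose (k+1) * (k+1) := (Nat.choose_succ_right_eq (n+1) k).symm
    _ = (n+1) * n.choose k := (Nat.add_one_mul_choose_eq n k).symm

lemma sum_deriv_eq (n : ℕ) (x t : ℝ) :
    ∑ k ∈ range (n+2), ((n+1).choose k : ℝ) * btG x k * (((n+1-k : ℕ)):ℝ)
      * (t + ((n+1-k:ℕ):ℝ))^(n+1-k-1)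
    = (n+1) * ∑ k ∈ range (n+1), ((n).choose k : ℝ) * btG x k
      * ((t+1) + ((n-k:ℕ):ℝ))^(n-k) := by
  rw [Finset.sum_range_succ]
  have hz : ((n+1-(n+1) : ℕ):ℝ) = 0 := by norm_num
  rw [hz, mul_zero, zero_mul, add_zero, Finset.mul_sum]
  apply Finset.sum_congr rfl
  intro k hk
  have hk' : k ≤ n := by simpa [Nat.lt_succ_iff] using hk
  have h1 : (((n+1-k : ℕ)):ℝ) * (((n+1).choose k : ℕ) : ℝ) = ((n+1):ℝ) * ((n.choose k : ℕ) : ℝ) := by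
    have := choose_aux n k
    exact_mod_cast congrArg (Nat.cast : ℕ → ℝ) this
  have h2 : ((n+1-k:ℕ):ℝ) = ((n-k:ℕ):ℝ) + 1 := by
    have : n+1-k = (n-k)+1 := by omega
    rw [this]; push_cast; ring
  have h3 : n+1-k-1 = n-k := by omega
  rw [h3, h2]
  rw [show t + (((n-k:ℕ):ℝ) + 1) = (t+1) + ((n-k:ℕ):ℝ) from by ring]
  calc ((n+1).choose k : ℝ) * btG x k * (((n-k:ℕ):ℝ)+1) * ((t+1) + ((n-k:ℕ):ℝ))^(n-k)
      = ((((n-k:ℕ):ℝ)+1) * ((n+1).choose k : ℝ)) * (btG x k * ((t+1) + ((n-k:ℕ):ℝ))^(n-k)) := by ring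
    _ = (((n+1):ℝ) * ((n.choose k : ℕ) : ℝ)) * (btG x k * ((t+1) + ((n-k:ℕ):ℝ))^(n-k)) := by
        rw [← h1, h2]
    _ = ((n:ℝ)+1) * ((n.choose k : ℝ) * btG x k * ((t+1) + ((n-k:ℕ):ℝ))^(n-k)) := by
        push_cast; ring

lemma btB_eq (x : ℝ) : ∀ (n : ℕ) (y : ℝ),
    ∑ k ∈ range (n+1), (n.choose k : ℝ) * btG x k * (y + ((n-k:ℕ):ℝ))^(n-k)
      = (x+y+(n:ℝ))^n := by
  intro n
  induction n with
  | zero => intro y; simp [btG]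
  | succ n ih =>
    intro y
    set F : ℝ → ℝ := fun t =>
      (∑ k ∈ range (n+2), ((n+1).choose k : ℝ) * btG x k * (t + ((n+1-k:ℕ):ℝ))^(n+1-k))
        - (x+t+((n:ℝ)+1))^(n+1) with hF
    have hderiv : ∀ t, HasDerivAt F 0 t := by
      intro t
      have hsum : HasDerivAt
          (fun t => ∑ k ∈ range (n+2),
            ((n+1).choose k : ℝ) * btG x k * (t + ((n+1-k:ℕ):ℝ))^(n+1-k))
          (∑ k ∈ range (n+2), ((n+1).choose k : ℝ) * btG x k * (((n+1-k : ℕ)):ℝ)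
            * (t + ((n+1-k:ℕ):ℝ))^(n+1-k-1)) t := by
        apply HasDerivAt.fun_sum
        intro k hk
        have h1 : HasDerivAt (fun t:ℝ => t + ((n+1-k:ℕ):ℝ)) 1 t := (hasDerivAt_id t).add_const _
        have h2 := (h1.pow (n+1-k)).const_mul (((n+1).choose k : ℝ) * btG x k)
        have h4 : (((n+1).choose k : ℝ) * btG x k) *
            ((n+1-k : ℕ) * (t + ((n+1-k:ℕ):ℝ))^(n+1-k-1) * 1)
            = ((n+1).choose k : ℝ) * btG x k * (((n+1-k : ℕ)):ℝ)
              * (t + ((n+1-k:ℕ):ℝ))^(n+1-k-1) := by ring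
        exact h4 ▸ h2
      have hpow : HasDerivAt (fun t:ℝ => (x+t+((n:ℝ)+1))^(n+1))
          (((n:ℝ)+1) * (x+t+((n:ℝ)+1))^n) t := by
        have h1 : HasDerivAt (fun t:ℝ => x+t+((n:ℝ)+1)) 1 t :=
          ((hasDerivAt_id t).const_add x).add_const _
        have h2 := h1.pow (n+1)
        have h4 : ((n+1:ℕ) : ℝ) * (x+t+((n:ℝ)+1))^(n+1-1) * 1
            = ((n:ℝ)+1) * (x+t+((n:ℝ)+1))^n := by push_cast; ring_nf
        exact h4 ▸ h2
      have hcomb := hsum.sub hpow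
      have hval : (∑ k ∈ range (n+2), ((n+1).choose k : ℝ) * btG x k * (((n+1-k : ℕ)):ℝ)
            * (t + ((n+1-k:ℕ):ℝ))^(n+1-k-1)) - ((n:ℝ)+1) * (x+t+((n:ℝ)+1))^n = 0 := by
        rw [sum_deriv_eq n x t, ih (t+1)]
        push_cast
        ring_nf
      rw [hF]
      exact hval ▸ hcomb
    have hconst : F y = F (-x-((n:ℝ)+1)) :=
      is_const_of_deriv_eq_zero (fun t => (hderiv t).differentiableAt)
        (fun t => (hderiv t).deriv) y _
    have hzero : F (-x-((n:ℝ)+1)) = 0 := by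
      rw [hF]
      beta_reduce
      have hterm : ∀ k ∈ range (n+2),
          ((n+1).choose k : ℝ) * btG x k * ((-x-((n:ℝ)+1)) + ((n+1-k:ℕ):ℝ))^(n+1-k)
          = ((-1:ℝ)^(n+1) * x) * ((-1:ℝ)^k * ((n+1).choose k : ℝ)
              * (((X : Polynomial ℝ) + C x)^n).eval (k:ℝ)) := by
        intro k hk
        have hk' : k ≤ n+1 := by simpa [Nat.lt_succ_iff] using hk
        have hc : ((n+1-k:ℕ):ℝ) = ((n:ℝ)+1) - (k:ℝ) := by
          push_cast [Nat.cast_sub hk']; ring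
        have hbase : (-x-((n:ℝ)+1)) + ((n+1-k:ℕ):ℝ) = -(x + (k:ℕ)) := by
          rw [hc]; push_cast; ring
        rw [hbase, neg_pow]
        have hsign : (-1:ℝ)^(n+1-k) = (-1:ℝ)^(n+1) * (-1:ℝ)^k := by
          have h5 : (-1:ℝ)^(n+1+k) = (-1:ℝ)^(n+1-k) := by
            rw [show n+1+k = (n+1-k) + 2*k from by omega, pow_add, pow_mul]
            norm_num
          rw [← h5, pow_add]
        have hG : btG x k * (x + (k:ℕ))^(n+1-k) = x * (x + (k:ℕ))^n := by
          rw [btG_mul_pow x k (n+1-k) (by omega), show k + (n+1-k) - 1 = n from by omega]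
        have heval : (((X : Polynomial ℝ) + C x)^n).eval (k:ℝ) = (x + (k:ℕ))^n := by
          simp [add_comm]
        rw [heval]
        calc ((n+1).choose k : ℝ) * btG x k * ((-1:ℝ)^(n+1-k) * (x + (k:ℕ))^(n+1-k))
            = (-1:ℝ)^(n+1-k) * ((n+1).choose k : ℝ) * (btG x k * (x + (k:ℕ))^(n+1-k)) := by ring
          _ = (-1:ℝ)^(n+1-k) * ((n+1).choose k : ℝ) * (x * (x + (k:ℕ))^n) := by rw [hG]
          _ = ((-1:ℝ)^(n+1) * x) * ((-1:ℝ)^k * ((n+1).choose k : ℝ) * (x + (k:ℕ))^n) := by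
              rw [hsign]; ring
      rw [Finset.sum_congr rfl hterm, ← Finset.mul_sum]
      have hdeg : (((X : Polynomial ℝ) + C x)^n).degree < ((n+1 : ℕ) : WithBot ℕ) := by
        refine lt_of_le_of_lt (Polynomial.degree_le_natDegree) ?_
        have : (((X : Polynomial ℝ) + C x)^n).natDegree = n := by
          rw [Polynomial.natDegree_pow, Polynomial.natDegree_X_add_C, mul_one]
        rw [this]
        exact_mod_cast Nat.lt_succ_self n
      rw [findiff (n+1) _ hdeg, mul_zero]
      have : x + (-x-((n:ℝ)+1)) + ((n:ℝ)+1) = 0 := by ring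
      rw [this, zero_pow (Nat.succ_ne_zero n), sub_zero]
    have hFy : F y = 0 := hconst.trans hzero
    have hcast : ((n+1:ℕ):ℝ) = (n:ℝ)+1 := by push_cast; ring
    rw [hcast]
    exact sub_eq_zero.mp hFy

lemma btG_split (y : ℝ) (m : ℕ) :
    btG y m = (y + (m:ℕ))^m - (m:ℝ) * (y + (m:ℕ))^(m-1) := by
  cases m with
  | zero => simp [btG]
  | succ m' =>
    show y * (y + ((m'+1:ℕ):ℝ))^m' = _
    rw [show m'+1-1 = m' from rfl, pow_succ]
    push_cast
    ring

lemma btS_eq (n : ℕ) (hn : 1 ≤ n) (x y : ℝ) :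
    ∑ k ∈ range (n+1), (n.choose k : ℝ) * btG x k * btG y (n-k)
    = (x+y) * (x+y+(n:ℝ))^(n-1) := by
  obtain ⟨m, rfl⟩ : ∃ m, n = m+1 := ⟨n-1, by omega⟩
  have hsplit : ∀ k ∈ range (m+1+1), ((m+1).choose k : ℝ) * btG x k * btG y (m+1-k)
      = ((m+1).choose k : ℝ) * btG x k * (y + ((m+1-k:ℕ):ℝ))^(m+1-k)
        - ((m+1).choose k : ℝ) * btG x k * (((m+1-k:ℕ)):ℝ)
          * (y + ((m+1-k:ℕ):ℝ))^(m+1-k-1) := by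
    intro k _
    rw [btG_split y (m+1-k)]
    ring
  rw [Finset.sum_congr rfl hsplit, Finset.sum_sub_distrib, btB_eq x (m+1) y]
  have h2 : ∑ k ∈ range (m+1+1), ((m+1).choose k : ℝ) * btG x k * (((m+1-k:ℕ)):ℝ)
          * (y + ((m+1-k:ℕ):ℝ))^(m+1-k-1)
      = (m+1) * ((x+(y+1)+(m:ℝ))^m) := by
    rw [show m+1+1 = m+2 from rfl, sum_deriv_eq m x y, btB_eq x m (y+1)]
  rw [h2]
  have hc : ((m+1:ℕ):ℝ) = (m:ℝ)+1 := by push_cast; ring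
  rw [hc, show m+1-1 = m from rfl, pow_succ]
  ring

/-- Borel-Tanner coefficient `a_k(x) = k x^{x-k-1}/(x-k)!`. -/
noncomputable def btCoeff (k x : ℕ) : ℝ :=
  (k : ℝ) * (x : ℝ) ^ ((x : ℤ) - k - 1) / (Nat.factorial (x - k))

/-- Borel-Tanner pmf `p(x|θ,k) = a_k(x) θ^{x-k} e^{-θx}`. -/
noncomputable def btPmf (k x : ℕ) (θ : ℝ) : ℝ :=
  btCoeff k x * θ ^ (x - k) * Real.exp (-θ * x)

lemma btCoeff_eq (k j : ℕ) (hk : 0 < k) : btCoeff k (k+j) = btG k j / (j.factorial : ℝ) := by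
  unfold btCoeff
  rw [show k + j - k = j from by omega]
  cases j with
  | zero =>
    have he : (((k+0:ℕ):ℤ) - k - 1) = (-1 : ℤ) := by push_cast; ring
    rw [he]
    have hk0 : ((k:ℕ):ℝ) ≠ 0 := Nat.cast_ne_zero.mpr hk.ne'
    rw [zpow_neg_one]
    rw [show (((k+0:ℕ):ℕ):ℝ) = ((k:ℕ):ℝ) from by norm_num]
    rw [mul_inv_cancel₀ hk0]
    simp [btG]
  | succ j' =>
    have he : (((k+(j'+1):ℕ):ℤ) - k - 1) = ((j' : ℕ) : ℤ) := by push_cast; ring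
    rw [he, zpow_natCast]
    show (k:ℝ) * (((k+(j'+1):ℕ):ℝ))^j' / _ = ((k:ℝ) * (((k:ℝ) + ((j'+1:ℕ):ℝ)))^j') / _
    congr 2
    push_cast
    ring

/-- The sum of independent Borel-Tanner variables with parameters `(θ,r)` and
`(θ,s)` is Borel-Tanner `(θ, r+s)`: the pmfs convolve, equivalently
`Σ_{x=r}^{z-s} a_r(x) a_s(z-x) = a_{r+s}(z)` (Abel's identity). -/
theorem borel_tanner_convolution (r s : ℕ) (hr : 0 < r) (hs : 0 < s)
    (z : ℕ) (hz : r + s ≤ z) (θ : ℝ) (hθ0 : 0 < θ) (hθ1 : θ < 1) :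
    (∑ x ∈ Finset.Icc r (z - s), btPmf r x θ * btPmf s (z - x) θ =
      btPmf (r + s) z θ) ∧
    (∑ x ∈ Finset.Icc r (z - s), btCoeff r x * btCoeff s (z - x) =
      btCoeff (r + s) z) := by
  set n := z - (r + s) with hn
  have hzn : z = r + s + n := by omega
  have hcoe : ∑ x ∈ Finset.Icc r (z - s), btCoeff r x * btCoeff s (z - x)
      = btCoeff (r + s) z := by
    have hIcc : Finset.Icc r (z - s) = Finset.Ico r (r + (n+1)) := by
      ext a
      simp only [Finset.mem_Icc, Finset.mem_Ico]
      omega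
    rw [hIcc, Finset.sum_Ico_eq_sum_range]
    rw [show r + (n+1) - r = n + 1 from by omega]
    have hterm : ∀ j ∈ range (n+1), btCoeff r (r+j) * btCoeff s (z - (r+j))
        = ((n.choose j : ℝ) * btG r j * btG s (n-j)) / (n.factorial : ℝ) := by
      intro j hj
      have hj' : j ≤ n := by simpa [Nat.lt_succ_iff] using hj
      rw [show z - (r+j) = s + (n-j) from by omega, btCoeff_eq r j hr, btCoeff_eq s (n-j) hs]
      have hfac : ((n.choose j : ℕ) : ℝ) * (j.factorial : ℝ) * ((n-j).factorial : ℝ)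
          = (n.factorial : ℝ) := by
        exact_mod_cast congrArg (Nat.cast : ℕ → ℝ) (Nat.choose_mul_factorial_mul_factorial hj')
      have hj0 : (j.factorial : ℝ) ≠ 0 := Nat.cast_ne_zero.mpr (Nat.factorial_ne_zero j)
      have hnj0 : ((n-j).factorial : ℝ) ≠ 0 := Nat.cast_ne_zero.mpr (Nat.factorial_ne_zero _)
      have hn0 : (n.factorial : ℝ) ≠ 0 := Nat.cast_ne_zero.mpr (Nat.factorial_ne_zero n)
      rw [div_mul_div_comm, div_eq_div_iff (mul_ne_zero hj0 hnj0) hn0]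
      linear_combination (-(btG (r:ℝ) j * btG (s:ℝ) (n-j))) * hfac
    rw [Finset.sum_congr rfl hterm, ← Finset.sum_div]
    rcases Nat.eq_zero_or_pos n with hn0 | hn1
    · rw [hn0]
      have hz' : z = r + s := by omega
      have hsum : (∑ j ∈ range (0+1), ((Nat.choose 0 j : ℕ) : ℝ) * btG (r:ℝ) j * btG (s:ℝ) (0-j)) = 1 := by
        simp [btG]
      rw [hsum, hz']
      unfold btCoeff
      rw [show (((r+s:ℕ):ℤ) - (r+s:ℕ) - 1) = (-1:ℤ) from by push_cast; ring]
      have hrs0 : (((r+s:ℕ)):ℝ) ≠ 0 := Nat.cast_ne_zero.mpr (by omega)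
      rw [zpow_neg_one, mul_inv_cancel₀ hrs0]
      norm_num
    · rw [btS_eq n hn1 (r:ℝ) (s:ℝ)]
      unfold btCoeff
      rw [show z - (r + s) = n from hn.symm]
      have he : ((z:ℤ) - ((r+s:ℕ):ℕ) - 1) = (((n-1:ℕ):ℕ) : ℤ) := by
        omega
      rw [he, zpow_natCast]
      have hzc : ((z:ℕ):ℝ) = (r:ℝ) + (s:ℝ) + (n:ℝ) := by
        rw [hzn]; push_cast; ring
      rw [hzc]
      push_cast
      ring
  refine ⟨?_, hcoe⟩
  have hterm : ∀ x ∈ Finset.Icc r (z - s), btPmf r x θ * btPmf s (z - x) θ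
      = (btCoeff r x * btCoeff s (z - x)) * (θ^n * Real.exp (-θ * z)) := by
    intro x hx
    obtain ⟨hx1, hx2⟩ := Finset.mem_Icc.mp hx
    unfold btPmf
    have hp : θ^(x-r) * θ^(z-x-s) = θ^n := by
      rw [← pow_add]
      congr 1
      omega
    have hex : Real.exp (-θ * x) * Real.exp (-θ * (z-x:ℕ)) = Real.exp (-θ * z) := by
      rw [← Real.exp_add]
      congr 1
      rw [Nat.cast_sub (by omega : x ≤ z)]
      ring
    calc btCoeff r x * θ^(x-r) * Real.exp (-θ*x) * (btCoeff s (z-x) * θ^(z-x-s) * Real.exp (-θ*(z-x:ℕ)))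
        = (btCoeff r x * btCoeff s (z-x)) * ((θ^(x-r) * θ^(z-x-s)) * (Real.exp (-θ*x) * Real.exp (-θ*(z-x:ℕ)))) := by ring
      _ = (btCoeff r x * btCoeff s (z-x)) * (θ^n * Real.exp (-θ * z)) := by rw [hp, hex]
  rw [Finset.sum_congr rfl hterm, ← Finset.sum_mul, hcoe]
  unfold btPmf
  rw [show z - (r + s) = n from hn.symm, mul_assoc]
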